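/- (Banach–Mazur theorem) Every separable real Banach space X admits a linear isometric embedding into the Banach space C(Δ) of continuous real-valued functions on the Cantor set Δ = {0,1}^ℕ, equipped with the supremum norm. -/

import Mathlib

open Classical

noncomputable def bterm (n : ℕ) (d : ℕ → Bool) : ℝ := if d n then ((2:ℝ)⁻¹)^(n+1) else 0

lemma bterm_nonneg (n : ℕ) (d : ℕ → Bool) : 0 ≤ bterm n d := by
  unfold bterm
  split
  · positivity
  · positivity

lemma bterm_le (n : ℕ) (d : ℕ → Bool) : bterm n d ≤ ((2:ℝ)⁻¹)^(n+1) := by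
  unfold bterm; split
  · exact le_refl _
  · positivity

lemma geom_summable : Summable (fun n : ℕ => ((2:ℝ)⁻¹)^(n+1)) := by
  have := (summable_geometric_of_lt_one (r := (2:ℝ)⁻¹) (by norm_num) (by norm_num)).mul_left (2:ℝ)⁻¹
  exact this.congr (by intro n; ring)

/-- Binary value of a bit stream. -/
noncomputable def bval (d : ℕ → Bool) : ℝ := ∑' n : ℕ, bterm n d

lemma bval_summable (d : ℕ → Bool) : Summable (fun n => bterm n d) :=
  Summable.of_nonneg_of_le (fun n => bterm_nonneg n d) (fun n => bterm_le n d) geom_summable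

lemma bval_continuous : Continuous bval := by
  apply continuous_tsum (u := fun n : ℕ => ((2:ℝ)⁻¹)^(n+1)) _ geom_summable
  · intro n d
    rw [Real.norm_eq_abs, abs_of_nonneg (bterm_nonneg n d)]
    exact bterm_le n d
  · intro n
    exact (continuous_of_discreteTopology (f := fun b : Bool => if b then ((2:ℝ)⁻¹)^(n+1) else 0)).comp (continuous_apply n)

/-- digits of t -/
noncomputable def bdig (t : ℝ) (n : ℕ) : Bool := decide (⌊2^(n+1) * t⌋ ≠ 2 * ⌊2^n * t⌋)

lemma bdig_step (t : ℝ) (n : ℕ) :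
    (⌊2^(n+1) * t⌋ : ℤ) = 2 * ⌊2^n * t⌋ ∨ (⌊2^(n+1) * t⌋ : ℤ) = 2 * ⌊2^n * t⌋ + 1 := by
  set y : ℝ := 2^n * t with hy
  have h1 : (2:ℝ)^(n+1) * t = 2 * y := by rw [hy]; ring
  have hfl : (2 * ⌊y⌋ : ℤ) ≤ ⌊2 * y⌋ := by
    apply Int.le_floor.mpr
    push_cast
    nlinarith [Int.floor_le y]
  have hfu : (⌊2 * y⌋ : ℤ) < 2 * ⌊y⌋ + 2 := by
    apply Int.floor_lt.mpr
    push_cast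
    nlinarith [Int.lt_floor_add_one y]
  rw [h1]
  omega

lemma bdig_partial (t : ℝ) (ht0 : 0 ≤ t) (ht1 : t < 1) (N : ℕ) :
    ∑ n ∈ Finset.range N, bterm n (bdig t) = (⌊2^N * t⌋ : ℤ) / 2^N := by
  induction N with
  | zero =>
    have : ⌊(2:ℝ)^0 * t⌋ = 0 := by
      rw [pow_zero, one_mul]
      exact Int.floor_eq_zero_iff.mpr ⟨ht0, ht1⟩
    simp only [pow_zero, one_mul] at this
    simp [this]
  | succ N ih =>
    rw [Finset.sum_range_succ, ih]
    have h := bdig_step t N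
    unfold bterm bdig
    rcases h with h | h
    · rw [if_neg (by simp [h])]
      rw [h]
      push_cast
      field_simp
      ring
    · rw [if_pos (by simp [h])]
      rw [h]
      push_cast
      rw [inv_pow]
      field_simp
      ring

lemma bval_bdig (t : ℝ) (ht0 : 0 ≤ t) (ht1 : t < 1) : bval (bdig t) = t := by
  have hs := bval_summable (bdig t)
  have htend := hs.hasSum.tendsto_sum_nat
  have heq : ∀ N, ∑ n ∈ Finset.range N, bterm n (bdig t) = (⌊2^N * t⌋ : ℤ) / 2^N :=
    bdig_partial t ht0 ht1
  have htend2 : Filter.Tendsto (fun N : ℕ => ((⌊2^N * t⌋ : ℤ) : ℝ) / 2^N) Filter.atTop (nhds t) := by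
    rw [tendsto_iff_dist_tendsto_zero]
    apply squeeze_zero (fun N => dist_nonneg) (g := fun N : ℕ => ((2:ℝ)⁻¹)^N)
    · intro N
      have h2 : (0:ℝ) < 2^N := by positivity
      rw [Real.dist_eq, abs_le]
      have hl := Int.floor_le ((2:ℝ)^N * t)
      have hu := Int.lt_floor_add_one ((2:ℝ)^N * t)
      have hinv : ((2:ℝ)⁻¹)^N = 1 / 2^N := by
        rw [inv_pow]; ring
      rw [hinv, div_sub' (ne_of_gt h2)]
      constructor
      · rw [show -(1/(2:ℝ)^N) = (-1)/2^N by ring, div_le_div_iff_of_pos_right h2]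
        linarith
      · rw [div_le_div_iff_of_pos_right h2]
        linarith
    · exact tendsto_pow_atTop_nhds_zero_of_lt_one (by norm_num) (by norm_num)
  have h3 : Filter.Tendsto (fun N : ℕ => ∑ n ∈ Finset.range N, bterm n (bdig t))
      Filter.atTop (nhds t) := by
    rw [show (fun N : ℕ => ∑ n ∈ Finset.range N, bterm n (bdig t))
        = fun N : ℕ => ((⌊2^N * t⌋ : ℤ) : ℝ) / 2^N from funext heq]
    exact htend2
  exact tendsto_nhds_unique htend h3

lemma bval_bdig' (t : ℝ) (ht0 : 0 ≤ t) (ht1 : t < 1) : ∃ d, bval d = t :=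
  ⟨bdig t, bval_bdig t ht0 ht1⟩

open Classical in
/-- Canonical retraction-ish bit stream toward the set `A`. -/
noncomputable def rb (A : Set (ℕ → Bool)) (d : ℕ → Bool) : ℕ → Bool
  | n => if ∃ a ∈ A, (∀ k, (_h : k < n) → a k = rb A d k) ∧ a n = d n then d n else !d n
  termination_by n => n
  decreasing_by all_goals omega

open Classical in
lemma rb_def (A : Set (ℕ → Bool)) (d : ℕ → Bool) (n : ℕ) :
    rb A d n = if ∃ a ∈ A, (∀ k, k < n → a k = rb A d k) ∧ a n = d n then d n else !d n := by
  rw [rb]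

/-- Invariant: the prefix chosen so far is extendable inside `A`. -/
lemma rb_invariant (A : Set (ℕ → Bool)) (hne : A.Nonempty) (d : ℕ → Bool) :
    ∀ n, ∃ a ∈ A, ∀ k, k < n → a k = rb A d k := by
  intro n
  induction n with
  | zero => obtain ⟨a, ha⟩ := hne; exact ⟨a, ha, fun k hk => absurd hk (Nat.not_lt_zero k)⟩
  | succ n ih =>
    obtain ⟨a, haA, hak⟩ := ih
    by_cases h : ∃ a ∈ A, (∀ k, k < n → a k = rb A d k) ∧ a n = d n
    · obtain ⟨b, hbA, hbk, hbn⟩ := h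
      refine ⟨b, hbA, fun k hk => ?_⟩
      by_cases hkn : k < n
      · exact hbk k hkn
      · have hkn' : k = n := by omega
        subst hkn'
        rw [hbn, rb_def]
        rw [if_pos ⟨b, hbA, hbk, hbn⟩]
    · refine ⟨a, haA, fun k hk => ?_⟩
      by_cases hkn : k < n
      · exact hak k hkn
      · have hkn' : k = n := by omega
        subst hkn'
        rw [rb_def, if_neg h]
        cases hdn : d k <;> cases han : a k
        · exact absurd ⟨a, haA, hak, by rw [han, hdn]⟩ h
        · simp [han, hdn]
        · simp [han, hdn]
        · exact absurd ⟨a, haA, hak, by rw [han, hdn]⟩ h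

lemma rb_mem (A : Set (ℕ → Bool)) (hA : IsClosed A) (hne : A.Nonempty) (d : ℕ → Bool) :
    rb A d ∈ A := by
  choose a haA hak using rb_invariant A hne d
  have htend : Filter.Tendsto a Filter.atTop (nhds (rb A d)) := by
    rw [tendsto_pi_nhds]
    intro k
    apply tendsto_nhds_of_eventually_eq
    filter_upwards [Filter.eventually_gt_atTop k] with n hn
    exact hak n k hn
  exact hA.mem_of_tendsto htend (Filter.Eventually.of_forall haA)

lemma rb_fixed (A : Set (ℕ → Bool)) {d : ℕ → Bool} (hd : d ∈ A) : rb A d = d := by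
  funext n
  induction n using Nat.strong_induction_on with
  | _ n ih =>
    rw [rb_def, if_pos ⟨d, hd, fun k hk => (ih k hk).symm, rfl⟩]

lemma rb_agree (A : Set (ℕ → Bool)) (d d' : ℕ → Bool) :
    ∀ n, (∀ k, k ≤ n → d k = d' k) → rb A d n = rb A d' n := by
  intro n
  induction n using Nat.strong_induction_on with
  | _ n ih =>
    intro hdd
    have hcond : (∃ a ∈ A, (∀ k, k < n → a k = rb A d k) ∧ a n = d n)
        ↔ (∃ a ∈ A, (∀ k, k < n → a k = rb A d' k) ∧ a n = d' n) := by
      constructor <;> rintro ⟨a, haA, hak, han⟩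
      · exact ⟨a, haA, fun k hk => (hak k hk).trans (ih k hk (fun j hj => hdd j (hj.trans hk.le))),
          han.trans (hdd n le_rfl)⟩
      · exact ⟨a, haA, fun k hk => (hak k hk).trans (ih k hk (fun j hj => hdd j (hj.trans hk.le))).symm,
          han.trans (hdd n le_rfl).symm⟩
    rw [rb_def, rb_def]
    by_cases h : ∃ a ∈ A, (∀ k, k < n → a k = rb A d k) ∧ a n = d n
    · rw [if_pos h, if_pos (hcond.mp h)]
      exact hdd n le_rfl
    · rw [if_neg h, if_neg (fun hc => h (hcond.mpr hc))]
      rw [hdd n le_rfl]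

lemma rb_continuous (A : Set (ℕ → Bool)) : Continuous (rb A) := by
  apply continuous_pi
  intro n
  have hfac : (fun d => rb A d n)
      = (fun v : Fin (n+1) → Bool => rb A (fun k => if h : k < n + 1 then v ⟨k, h⟩ else false) n)
        ∘ (fun d (k : Fin (n+1)) => d k) := by
    funext d
    exact rb_agree A d _ n (fun k hk => by simp [Nat.lt_succ_of_le hk])
  rw [hfac]
  exact (continuous_of_discreteTopology).comp (continuous_pi fun k => continuous_apply _)


open TopologicalSpace Metric NormedSpace Set in
/-- **Banach–Mazur theorem.** Every separable real Banach space embeds linearly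
isometrically into `C(Δ)`, the space of continuous real-valued functions on the Cantor
set `Δ = {0,1}^ℕ` with the supremum norm. -/
theorem banach_mazur
    {X : Type*} [NormedAddCommGroup X] [NormedSpace ℝ X] [CompleteSpace X]
    [TopologicalSpace.SeparableSpace X] :
    ∃ T : X →ₗ[ℝ] C((ℕ → Bool), ℝ), ∀ x : X, ‖T x‖ = ‖x‖ := by
  haveI : Nonempty X := ⟨0⟩
  obtain ⟨u, hu⟩ := TopologicalSpace.exists_dense_seq X
  set c : ℕ → ℝ := fun n => ‖u n‖ + 1 with hc
  have hcpos : ∀ n, 0 < c n := fun n => by positivity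
  -- the evaluation embedding of the weak dual into ℝ^ℕ
  set e : WeakDual ℝ X → ℕ → ℝ := fun f n => f (u n) with he
  have he_cont : Continuous e := continuous_pi fun n => WeakDual.eval_continuous (u n)
  set B : Set (WeakDual ℝ X) := WeakDual.toStrongDual ⁻¹' Metric.closedBall 0 1 with hBdef
  have hBcomp : IsCompact B := WeakDual.isCompact_closedBall (𝕜 := ℝ) (E := X) 0 1
  have hB0 : (0 : WeakDual ℝ X) ∈ B := by simp [hBdef]
  have hBnorm : ∀ f ∈ B, ∀ x : X, ‖f x‖ ≤ ‖x‖ := by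
    intro f hf x
    have h1 : ‖WeakDual.toStrongDual f‖ ≤ 1 := by
      simpa [hBdef, mem_closedBall_zero_iff] using hf
    calc ‖f x‖ ≤ ‖WeakDual.toStrongDual f‖ * ‖x‖ := (WeakDual.toStrongDual f).le_opNorm x
    _ ≤ 1 * ‖x‖ := mul_le_mul_of_nonneg_right h1 (norm_nonneg x)
    _ = ‖x‖ := one_mul _
  have heB : ∀ f ∈ B, ∀ n, |e f n| < c n := by
    intro f hf n
    have := hBnorm f hf (u n)
    rw [he]
    simp only [Real.norm_eq_abs] at this ⊢
    calc |f (u n)| ≤ ‖u n‖ := this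
    _ < c n := by rw [hc]; simp
  -- the "universal" map q : Cantor set → product of intervals
  set q : (ℕ → Bool) → ℕ → ℝ := fun d n => c n * (2 * bval (fun k => d (Nat.pair n k)) - 1)
    with hqdef
  have hq_cont : Continuous q := by
    apply continuous_pi
    intro n
    have h1 : Continuous fun d : ℕ → Bool => bval (fun k => d (Nat.pair n k)) :=
      bval_continuous.comp (continuous_pi fun k => continuous_apply _)
    exact continuous_const.mul ((continuous_const.mul h1).sub continuous_const)
  have hq_surj : ∀ y : ℕ → ℝ, (∀ n, |y n| < c n) → ∃ d, q d = y := by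
    intro y hy
    have ht : ∀ n, 0 ≤ (y n / c n + 1)/2 ∧ (y n / c n + 1)/2 < 1 := by
      intro n
      have h1 : |y n / c n| < 1 := by
        rw [abs_div, abs_of_pos (hcpos n), div_lt_one (hcpos n)]
        exact hy n
      rw [abs_lt] at h1
      constructor <;> [linarith [h1.1]; linarith [h1.2]]
    choose D hD using fun n => bval_bdig' ((y n / c n + 1)/2) (ht n).1 (ht n).2
    refine ⟨fun m => D (Nat.unpair m).1 (Nat.unpair m).2, ?_⟩
    funext n
    have hslice : (fun k => D (Nat.unpair (Nat.pair n k)).1 (Nat.unpair (Nat.pair n k)).2)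
        = D n := by funext k; rw [Nat.unpair_pair]
    rw [hqdef]
    simp only
    rw [hslice, hD n]
    field_simp
    rw [add_sub_cancel_right, mul_div_assoc', mul_comm, mul_div_assoc, div_self (hcpos n).ne', mul_one]
  -- the closed set A and the retraction
  set A : Set (ℕ → Bool) := q ⁻¹' (e '' B) with hAdef
  have hA_closed : IsClosed A := ((hBcomp.image he_cont).isClosed).preimage hq_cont
  have hA_ne : A.Nonempty := by
    obtain ⟨d₀, hd₀⟩ := hq_surj (e 0) (heB 0 hB0)
    exact ⟨d₀, by rw [hAdef, Set.mem_preimage, hd₀]; exact ⟨0, hB0, rfl⟩⟩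
  -- the homeomorphism between B and its image
  haveI hKcomp : CompactSpace B := isCompact_iff_compactSpace.mp hBcomp
  set eS : B → ℕ → ℝ := e ∘ Subtype.val with heS
  have heS_cont : Continuous eS := he_cont.comp continuous_subtype_val
  have heS_inj : Function.Injective eS := by
    intro f g hfg
    apply Subtype.ext
    have hvals : ∀ n, f.val (u n) = g.val (u n) := by
      intro n
      have := congrFun hfg n
      simpa [heS, he] using this
    have hcoe : (WeakDual.toStrongDual f.val : X → ℝ) = WeakDual.toStrongDual g.val := by
      apply Continuous.ext_on hu (WeakDual.toStrongDual f.val).continuous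
        (WeakDual.toStrongDual g.val).continuous
      rintro _ ⟨n, rfl⟩
      exact hvals n
    exact WeakDual.toStrongDual.injective (ContinuousLinearMap.coeFn_injective hcoe)
  have hrange : Set.range eS = e '' B := by
    rw [heS, Set.range_comp, Subtype.range_val]
  set eqv : B ≃ Set.range eS := Equiv.ofInjective eS heS_inj with heqv
  have heqv_cont : Continuous eqv := by
    have : Continuous fun f : B => (⟨eS f, Set.mem_range_self f⟩ : Set.range eS) :=
      heS_cont.subtype_mk _
    exact this
  set h : B ≃ₜ Set.range eS := Continuous.homeoOfEquivCompactToT2 (f := eqv) heqv_cont with hh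
  -- the map Ψ
  have hmem : ∀ d : ℕ → Bool, q (rb A d) ∈ Set.range eS := by
    intro d
    rw [hrange]
    exact rb_mem A hA_closed hA_ne d
  set Ψ : (ℕ → Bool) → WeakDual ℝ X := fun d => (h.symm ⟨q (rb A d), hmem d⟩).val with hΨ
  have hΨ_cont : Continuous Ψ :=
    continuous_subtype_val.comp (h.symm.continuous.comp
      ((hq_cont.comp (rb_continuous A)).subtype_mk hmem))
  have hΨB : ∀ d, Ψ d ∈ B := fun d => (h.symm ⟨q (rb A d), hmem d⟩).2
  have happly : ∀ (f : B), (h f).val = eS f := fun f => rfl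
  have hΨ_surj : ∀ f ∈ B, ∃ d, Ψ d = f := by
    intro f hf
    obtain ⟨d, hd⟩ := hq_surj (e f) (heB f hf)
    have hdA : d ∈ A := by rw [hAdef, Set.mem_preimage, hd]; exact ⟨f, hf, rfl⟩
    refine ⟨d, ?_⟩
    have hrb : rb A d = d := rb_fixed A hdA
    have h2 : h ⟨f, hf⟩ = ⟨q (rb A d), hmem d⟩ := by
      apply Subtype.ext
      rw [happly ⟨f, hf⟩]
      simp only [heS, Function.comp_apply]
      rw [hrb, hd]
    have h1 : h.symm ⟨q (rb A d), hmem d⟩ = ⟨f, hf⟩ := by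
      rw [← h2, Homeomorph.symm_apply_apply]
    show (h.symm ⟨q (rb A d), hmem d⟩).val = f
    rw [h1]
  -- build the linear map
  have hT_cont : ∀ x : X, Continuous fun d => Ψ d x := fun x =>
    (WeakDual.eval_continuous x).comp hΨ_cont
  set T : X →ₗ[ℝ] C((ℕ → Bool), ℝ) :=
    { toFun := fun x => ⟨fun d => Ψ d x, hT_cont x⟩
      map_add' := fun x y => by
        ext d
        exact map_add (Ψ d) x y
      map_smul' := fun r x => by
        ext d
        exact map_smul (Ψ d) r x } with hT
  refine ⟨T, fun x => ?_⟩
  apply le_antisymm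
  · rw [ContinuousMap.norm_le _ (norm_nonneg x)]
    intro d
    exact hBnorm (Ψ d) (hΨB d) x
  · obtain ⟨g, hg1, hgx⟩ := exists_dual_vector'' ℝ x
    have hgB : StrongDual.toWeakDual g ∈ B := by
      simp only [hBdef, Set.mem_preimage, mem_closedBall_zero_iff]
      simpa using hg1
    obtain ⟨d, hd⟩ := hΨ_surj _ hgB
    have hval : (T x) d = ‖x‖ := by
      show Ψ d x = ‖x‖
      rw [hd]
      simpa using hgx
    calc ‖x‖ = (T x) d := hval.symm
    _ ≤ ‖(T x) d‖ := le_abs_self _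
    _ ≤ ‖T x‖ := ContinuousMap.norm_coe_le_norm (T x) d
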